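/- Let d ≥ 1, 0 < s_ν ≤ d, and let ν be a compactly supported Borel measure on ℝ^d satisfying the s_ν-dimensional Frostman condition. Then for every η > 0 there exists a constant C = C(η) > 0 such that for every integer j ≥ 0 and every f ∈ L²(ν), ∫_{2^j ≤ |ξ| ≤ 2^{j+1}} |𝔽(fν)(ξ)|² dξ ≤ C · 2^{j(d − s_ν + η)} ‖f‖²_{L²(ν)}. -/

import Mathlib

open MeasureTheory Metric Filter Set
open scoped ENNReal NNReal Topology

noncomputable section

/-- The surface measure on the unit sphere `S^{d-1} ⊆ ℝ^d`:
the `(d-1)`-dimensional Hausdorff measure restricted to the sphere. -/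
def sphMeas (d : ℕ) : Measure (EuclideanSpace ℝ (Fin d)) :=
  (μH[(d : ℝ) - 1]).restrict (Metric.sphere 0 1)

/-- `σ_t`: the pushforward of the surface measure under dilation `z ↦ t • z`. -/
def sphMeasAt (d : ℕ) (t : ℝ) : Measure (EuclideanSpace ℝ (Fin d)) :=
  (sphMeas d).map (fun z => t • z)

/-- The Fourier transform of the measure `f dμ`:
`𝔽(fμ)(ξ) = ∫ e^{-2πi x·ξ} f(x) dμ(x)`. -/
def fourierM {d : ℕ} (μ : Measure (EuclideanSpace ℝ (Fin d)))
    (f : EuclideanSpace ℝ (Fin d) → ℂ) (ξ : EuclideanSpace ℝ (Fin d)) : ℂ :=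
  ∫ x, Complex.exp ((-(2 * Real.pi * (inner ℝ x ξ : ℝ)) : ℝ) * Complex.I) * f x ∂μ

/-- The (closed) support of a Borel measure: points all of whose neighborhoods
have positive measure. -/
def measSupp {d : ℕ} (μ : Measure (EuclideanSpace ℝ (Fin d))) :
    Set (EuclideanSpace ℝ (Fin d)) :=
  {x | ∀ r : ℝ, 0 < r → 0 < μ (Metric.ball x r)}

/-- The `s`-dimensional Frostman condition with constant `C`:
`μ(B(x,r)) ≤ C r^s` for all `x` and all `r > 0`. -/
def IsFrostman {d : ℕ} (μ : Measure (EuclideanSpace ℝ (Fin d))) (s C : ℝ) : Prop :=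
  ∀ (x : EuclideanSpace ℝ (Fin d)) (r : ℝ), 0 < r →
    μ (Metric.closedBall x r) ≤ ENNReal.ofReal (C * r ^ s)

/-- A measure is compactly supported. -/
def HasCompactSupportM {d : ℕ} (μ : Measure (EuclideanSpace ℝ (Fin d))) : Prop :=
  ∃ K : Set (EuclideanSpace ℝ (Fin d)), IsCompact K ∧ μ Kᶜ = 0

/-- The mollified convolution `(λ * ρ_ε)(w) = ∫ ε^{-d} ρ(ε⁻¹ (w - z)) dλ(z)`
of a measure `λ` with the rescaled bump `ρ_ε`. -/
def mollify (d : ℕ) (ρ : EuclideanSpace ℝ (Fin d) → ℝ) (ε : ℝ)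
    (lam : Measure (EuclideanSpace ℝ (Fin d))) (w : EuclideanSpace ℝ (Fin d)) : ℝ :=
  ∫ z, (ε ^ d)⁻¹ * ρ (ε⁻¹ • (w - z)) ∂lam

/-- The mollified spherical average `A_t^ε f(x) = ∫ (σ_t * ρ_ε)(x - y) f(y) dμ(y)`. -/
def mollAvg (d : ℕ) (ρ : EuclideanSpace ℝ (Fin d) → ℝ)
    (μ : Measure (EuclideanSpace ℝ (Fin d))) (ε t : ℝ)
    (f : EuclideanSpace ℝ (Fin d) → ℂ) (x : EuclideanSpace ℝ (Fin d)) : ℂ :=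
  ∫ y, mollify d ρ ε (sphMeasAt d t) (x - y) • f y ∂μ

lemma ennreal_amgm (a b : ℝ≥0∞) : a * b ≤ a ^ 2 + b ^ 2 := by
  rcases le_total a b with h | h
  · calc a * b ≤ b * b := mul_le_mul' h le_rfl
      _ = b ^ 2 := (sq b).symm
      _ ≤ _ := le_add_self
  · calc a * b ≤ a * a := mul_le_mul' le_rfl h
      _ = a ^ 2 := (sq a).symm
      _ ≤ _ := le_self_add

lemma exists_dyadic {t : ℝ} (ht : 1 < t) : ∃ k : ℕ, (2:ℝ) ^ k < t ∧ t ≤ 2 ^ (k + 1) := by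
  classical
  have hP : ∃ n : ℕ, t ≤ 2 ^ n := by
    obtain ⟨n, hn⟩ := pow_unbounded_of_one_lt t (one_lt_two (α := ℝ))
    exact ⟨n, hn.le⟩
  have h₀ : t ≤ 2 ^ (Nat.find hP) := Nat.find_spec hP
  have hn₀ : Nat.find hP ≠ 0 := by
    intro h
    rw [h] at h₀
    simp at h₀
    linarith
  obtain ⟨k, hk⟩ := Nat.exists_eq_succ_of_ne_zero hn₀
  have hlt : ¬ t ≤ 2 ^ k := Nat.find_min hP (by omega)
  refine ⟨k, by linarith [not_le.1 hlt], ?_⟩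
  rw [hk] at h₀
  simpa using h₀

section Stmt6Aux
variable {d : ℕ}

local notation "E" => EuclideanSpace ℝ (Fin d)

lemma frostman_gauss {ν : Measure (EuclideanSpace ℝ (Fin d))} {s Cν : ℝ} (hCν : 0 ≤ Cν)
    (hF : IsFrostman ν s Cν) :
    ∃ M : ℝ, 0 ≤ M ∧ ∀ a : ℝ, 1 ≤ a → ∀ x : EuclideanSpace ℝ (Fin d),
      ∫⁻ y, ENNReal.ofReal (Real.exp (-(a ^ 2 * ‖x - y‖ ^ 2))) ∂ν ≤
        ENNReal.ofReal (M * a ^ (-s)) := by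
  set b : ℕ → ℝ := fun k => Real.exp (1 - 4 ^ k) * ((2:ℝ) ^ (k+1)) ^ s with hb
  have hbpos : ∀ k, 0 < b k := fun k => by
    apply mul_pos (Real.exp_pos _)
    apply Real.rpow_pos_of_pos
    positivity
  have hsum : Summable b := by
    apply summable_of_ratio_norm_eventually_le (r := 1/2) (by norm_num)
    have htend : Filter.Tendsto (fun k : ℕ => Real.exp (-(3 * 4 ^ k)) * (2:ℝ) ^ s) atTop (nhds 0) := by
      rw [show (0:ℝ) = 0 * (2:ℝ) ^ s by ring]
      apply Filter.Tendsto.mul_const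
      apply Real.tendsto_exp_atBot.comp
      apply Filter.tendsto_neg_atBot_iff.2
      apply Filter.Tendsto.const_mul_atTop (by norm_num : (0:ℝ) < 3)
      exact tendsto_pow_atTop_atTop_of_one_lt (by norm_num)
    filter_upwards [htend.eventually_le_const (by norm_num : (0:ℝ) < 1/2)] with k hk
    have hbk : b (k+1) = b k * (Real.exp (-(3 * 4 ^ k)) * (2:ℝ) ^ s) := by
      rw [hb]
      simp only []
      have h1 : Real.exp (1 - 4 ^ (k+1)) = Real.exp (1 - 4 ^ k) * Real.exp (-(3 * 4 ^ k)) := by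
        rw [← Real.exp_add]
        congr 1
        rw [pow_succ]
        ring
      have h2 : ((2:ℝ) ^ (k+1+1)) ^ s = ((2:ℝ) ^ (k+1)) ^ s * (2:ℝ) ^ s := by
        rw [pow_succ, Real.mul_rpow (by positivity) (by norm_num)]
      rw [h1, h2]
      ring
    rw [Real.norm_of_nonneg (hbpos _).le, Real.norm_of_nonneg (hbpos _).le, hbk, mul_comm (1/2)]
    exact mul_le_mul_of_nonneg_left hk (hbpos k).le
  refine ⟨Cν * ∑' k, b k, mul_nonneg hCν (tsum_nonneg fun k => (hbpos k).le), ?_⟩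
  intro a ha x
  have hapos : (0:ℝ) < a := lt_of_lt_of_le one_pos ha
  have key : ∀ y : EuclideanSpace ℝ (Fin d), ENNReal.ofReal (Real.exp (-(a ^ 2 * ‖x - y‖ ^ 2))) ≤
      ∑' k : ℕ, (Metric.closedBall x ((2:ℝ) ^ (k+1) / a)).indicator
        (fun _ => ENNReal.ofReal (Real.exp (1 - 4 ^ k))) y := by
    intro y
    rcases le_or_gt (a * ‖x - y‖) 2 with h | h
    · refine le_trans ?_ (ENNReal.le_tsum 0)
      have hy : y ∈ Metric.closedBall x ((2:ℝ) ^ (0+1) / a) := by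
        rw [Metric.mem_closedBall, dist_comm, dist_eq_norm]
        rw [le_div_iff₀ hapos]
        norm_num
        linarith [h, mul_comm a ‖x - y‖]
      rw [Set.indicator_of_mem hy]
      apply ENNReal.ofReal_le_ofReal
      apply Real.exp_le_exp.2
      have : (0:ℝ) ≤ a ^ 2 * ‖x - y‖ ^ 2 := by positivity
      norm_num
      linarith
    · have ht : 1 < a * ‖x - y‖ / 2 := by linarith
      obtain ⟨k, hk1, hk2⟩ := exists_dyadic ht
      refine le_trans ?_ (ENNReal.le_tsum (k+1))
      have hy : y ∈ Metric.closedBall x ((2:ℝ) ^ (k+1+1) / a) := by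
        rw [Metric.mem_closedBall, dist_comm, dist_eq_norm, le_div_iff₀ hapos]
        rw [div_le_iff₀ (by norm_num : (0:ℝ) < 2)] at hk2
        calc ‖x - y‖ * a = a * ‖x - y‖ := mul_comm _ _
          _ ≤ 2 ^ (k+1) * 2 := hk2
          _ = 2 ^ (k+1+1) := by ring
      rw [Set.indicator_of_mem hy]
      apply ENNReal.ofReal_le_ofReal
      rw [Real.exp_le_exp]
      have h1 : (2:ℝ) ^ (k+1) < a * ‖x - y‖ := by
        have := (lt_div_iff₀ (by norm_num : (0:ℝ) < 2)).1 hk1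
        calc (2:ℝ) ^ (k+1) = 2 ^ k * 2 := by ring
          _ < a * ‖x - y‖ := by linarith
      have h2 : ((2:ℝ) ^ (k+1)) ^ 2 ≤ (a * ‖x - y‖) ^ 2 := by
        apply pow_le_pow_left₀ (by positivity) h1.le
      have h3 : ((2:ℝ) ^ (k+1)) ^ 2 = (4:ℝ) ^ (k+1) := by
        rw [← pow_mul, mul_comm (k+1) 2, pow_mul]
        norm_num
      have h4 : (a * ‖x - y‖) ^ 2 = a ^ 2 * ‖x - y‖ ^ 2 := by ring
      nlinarith
  calc ∫⁻ y, ENNReal.ofReal (Real.exp (-(a ^ 2 * ‖x - y‖ ^ 2))) ∂ν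
      ≤ ∫⁻ y, ∑' k : ℕ, (Metric.closedBall x ((2:ℝ) ^ (k+1) / a)).indicator
          (fun _ => ENNReal.ofReal (Real.exp (1 - 4 ^ k))) y ∂ν := lintegral_mono key
    _ = ∑' k : ℕ, ∫⁻ y, (Metric.closedBall x ((2:ℝ) ^ (k+1) / a)).indicator
          (fun _ => ENNReal.ofReal (Real.exp (1 - 4 ^ k))) y ∂ν := by
        apply lintegral_tsum
        intro k
        exact (measurable_const.indicator measurableSet_closedBall).aemeasurable
    _ ≤ ∑' k : ℕ, ENNReal.ofReal (Cν * a ^ (-s)) * ENNReal.ofReal (b k) := by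
        apply ENNReal.tsum_le_tsum
        intro k
        rw [lintegral_indicator_const measurableSet_closedBall]
        calc ENNReal.ofReal (Real.exp (1 - 4 ^ k)) * ν (Metric.closedBall x ((2:ℝ) ^ (k+1) / a))
            ≤ ENNReal.ofReal (Real.exp (1 - 4 ^ k)) *
              ENNReal.ofReal (Cν * ((2:ℝ) ^ (k+1) / a) ^ s) :=
              mul_le_mul_right (hF x _ (by positivity)) _
          _ = ENNReal.ofReal (Cν * a ^ (-s)) * ENNReal.ofReal (b k) := by
              rw [← ENNReal.ofReal_mul (Real.exp_pos _).le, ← ENNReal.ofReal_mul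
                (mul_nonneg hCν (Real.rpow_nonneg hapos.le _))]
              congr 1
              rw [Real.div_rpow (by positivity) hapos.le, Real.rpow_neg hapos.le, hb]
              field_simp
    _ = ENNReal.ofReal (Cν * a ^ (-s)) * ∑' k : ℕ, ENNReal.ofReal (b k) := ENNReal.tsum_mul_left
    _ = ENNReal.ofReal ((Cν * ∑' k, b k) * a ^ (-s)) := by
        rw [← ENNReal.ofReal_tsum_of_nonneg (fun k => (hbpos k).le) hsum,
          ← ENNReal.ofReal_mul (mul_nonneg hCν (Real.rpow_nonneg hapos.le _))]
        congr 1
        ring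


lemma fourierM_norm_le (ν : Measure E) (f : E → ℂ) (ξ : E) :
    ‖fourierM ν f ξ‖ ≤ ∫ x, ‖f x‖ ∂ν := by
  refine (norm_integral_le_integral_norm _).trans_eq ?_
  congr 1
  funext x
  rw [norm_mul, Complex.norm_exp_ofReal_mul_I, one_mul]

lemma fourierM_continuous {ν : Measure E} [IsFiniteMeasure ν] {f : E → ℂ}
    (hf : Integrable f ν) : Continuous (fourierM ν f) := by
  apply continuous_of_dominated (bound := fun x => ‖f x‖)
  · intro ξ
    refine (Continuous.aestronglyMeasurable ?_).mul hf.1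
    exact Complex.continuous_exp.comp
      ((Complex.continuous_ofReal.comp
        ((continuous_const.mul (continuous_id.inner continuous_const)).neg)).mul continuous_const)
  · intro ξ
    filter_upwards with x
    rw [norm_mul, Complex.norm_exp_ofReal_mul_I, one_mul]
  · exact hf.norm
  · filter_upwards with x
    apply Continuous.mul ?_ continuous_const
    apply Complex.continuous_exp.comp
    apply Continuous.mul ?_ continuous_const
    apply Complex.continuous_ofReal.comp
    exact ((continuous_const.mul (continuous_const.inner continuous_id)).neg)

lemma key {ν : Measure E} [IsFiniteMeasure ν] {f : E → ℂ}
    (hfm : StronglyMeasurable f) (hfi : Integrable f ν) {R : ℝ} (hR : 1 ≤ R) :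
    ∫⁻ ξ, (‖fourierM ν f ξ‖₊ : ℝ≥0∞) ^ 2 *
        ENNReal.ofReal (Real.exp (-((R ^ 2)⁻¹ * ‖ξ‖ ^ 2))) ≤
      ENNReal.ofReal ((Real.pi * R ^ 2) ^ ((d : ℝ) / 2)) *
        ∫⁻ x, ∫⁻ y, (‖f x‖₊ : ℝ≥0∞) * (‖f y‖₊ : ℝ≥0∞) *
          ENNReal.ofReal (Real.exp (-((Real.pi * R) ^ 2 * ‖x - y‖ ^ 2))) ∂ν ∂ν := by
  have hRpos : (0:ℝ) < R := lt_of_lt_of_le one_pos hR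
  set b : ℂ := (((R ^ 2)⁻¹ : ℝ) : ℂ) with hbdef
  have hb : 0 < b.re := by
    rw [hbdef, Complex.ofReal_re]
    positivity
  set F := fourierM ν f with hF
  set M : ℝ := ∫ x, ‖f x‖ ∂ν with hM
  have hFle : ∀ ξ, ‖F ξ‖ ≤ M := fourierM_norm_le ν f
  have hFcont : Continuous F := fourierM_continuous hfi
  set w : E → ℝ := fun ξ => Real.exp (-((R ^ 2)⁻¹ * ‖ξ‖ ^ 2)) with hw
  have hw_nonneg : ∀ ξ, 0 ≤ w ξ := fun ξ => (Real.exp_pos _).le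
  have hw_cont : Continuous w := by
    apply Real.continuous_exp.comp
    continuity
  -- the complex Gaussian
  have hgauss_eq : ∀ ξ : E, (w ξ : ℂ) = Complex.exp (-b * (‖ξ‖ : ℂ) ^ 2) := by
    intro ξ
    rw [hw, Complex.ofReal_exp, hbdef]
    congr 1
    push_cast
    ring
  have hgauss_int : Integrable (fun ξ : E => Complex.exp (-b * (‖ξ‖ : ℂ) ^ 2)) volume := by
    have h := GaussianFourier.integrable_cexp_neg_mul_sq_norm_add (V := E) hb 0 0
    apply h.congr
    filter_upwards with ξ
    simp
  have hGnorm : ∀ ξ : E, ‖Complex.exp (-b * (‖ξ‖ : ℂ) ^ 2)‖ = w ξ := by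
    intro ξ
    rw [Complex.norm_exp]
    have h2 : (-b * (‖ξ‖:ℂ) ^ 2) = ((-(((R ^ 2)⁻¹) * ‖ξ‖ ^ 2) : ℝ) : ℂ) := by
      rw [hbdef]; push_cast; ring
    rw [h2, Complex.ofReal_re]
  have hw_int : Integrable w volume :=
    hgauss_int.norm.congr (Filter.Eventually.of_forall hGnorm)
  have hFw_int : Integrable (fun ξ => ‖F ξ‖ ^ 2 * w ξ) volume := by
    refine ((hw_int.const_mul (M ^ 2)).mono'
      (((hFcont.norm.pow 2).mul hw_cont).aestronglyMeasurable) ?_)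
    filter_upwards with ξ
    rw [Real.norm_of_nonneg (by positivity)]
    have h1 : ‖F ξ‖ ^ 2 ≤ M ^ 2 := by
      apply pow_le_pow_left₀ (norm_nonneg _) (hFle ξ)
    exact mul_le_mul_of_nonneg_right h1 (hw_nonneg ξ)
  -- Step A
  have stepA : ∫⁻ ξ, (‖F ξ‖₊ : ℝ≥0∞) ^ 2 * ENNReal.ofReal (w ξ) =
      ENNReal.ofReal (∫ ξ, ‖F ξ‖ ^ 2 * w ξ) := by
    rw [MeasureTheory.ofReal_integral_eq_lintegral_ofReal hFw_int
      (Filter.Eventually.of_forall fun ξ => by positivity)]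
    apply lintegral_congr
    intro ξ
    rw [ENNReal.ofReal_mul (by positivity), ENNReal.ofReal_pow (norm_nonneg _),
      ofReal_norm, enorm_eq_nnnorm]
  -- Step B
  set g : E → ℂ := fun ξ => F ξ * (starRingEnd ℂ) (F ξ) * (w ξ : ℂ) with hg
  have hg_norm : ∀ ξ, ‖g ξ‖ = ‖F ξ‖ ^ 2 * w ξ := by
    intro ξ
    rw [hg]
    simp only [norm_mul, RCLike.norm_conj, Complex.norm_real,
      Real.norm_of_nonneg (hw_nonneg ξ)]
    ring
  have hg_int : Integrable g volume := by
    refine hFw_int.mono' ?_ ?_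
    · exact ((hFcont.mul (Complex.continuous_conj.comp hFcont)).mul
        (Complex.continuous_ofReal.comp hw_cont)).aestronglyMeasurable
    · filter_upwards with ξ
      rw [hg_norm ξ]
  have stepB : ∫ ξ, ‖F ξ‖ ^ 2 * w ξ = (∫ ξ, g ξ).re := by
    have : ∀ ξ, ‖F ξ‖ ^ 2 * w ξ = (g ξ).re := by
      intro ξ
      rw [hg]
      simp only [Complex.mul_conj]
      rw [← Complex.ofReal_mul]
      rw [Complex.ofReal_re]
      rw [Complex.normSq_eq_norm_sq]
    simp_rw [this]
    have := integral_re (𝕜 := ℂ) hg_int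
    simpa using this
  -- Step C : rewrite g as an integral over the product measure
  set K : E × E → ℝ := fun p => Real.exp (-((Real.pi * R) ^ 2 * ‖p.1 - p.2‖ ^ 2)) with hK
  have hK_nonneg : ∀ p, 0 ≤ K p := fun p => (Real.exp_pos _).le
  have hK_le_one : ∀ p, K p ≤ 1 := by
    intro p
    rw [hK]
    apply Real.exp_le_one_iff.2
    have : (0:ℝ) ≤ (Real.pi * R) ^ 2 * ‖p.1 - p.2‖ ^ 2 := by positivity
    linarith
  set Φ : E × E → E → ℂ := fun p ξ =>
    f p.1 * (starRingEnd ℂ) (f p.2) *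
      (Complex.exp ((↑(-(2 * Real.pi * (inner ℝ ξ (p.1 - p.2) : ℝ))) : ℂ) * Complex.I) *
        Complex.exp (-b * (‖ξ‖ : ℂ) ^ 2)) with hΦ
  have conj_exp : ∀ r : ℝ, (starRingEnd ℂ) (Complex.exp ((r : ℂ) * Complex.I)) =
      Complex.exp (((-r : ℝ) : ℂ) * Complex.I) := by
    intro r
    rw [← Complex.exp_conj]
    congr 1
    rw [map_mul, Complex.conj_ofReal, Complex.conj_I]
    push_cast
    ring
  have hprod : ∀ ξ, g ξ = ∫ p, Φ p ξ ∂(ν.prod ν) := by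
    intro ξ
    rw [hg]
    simp only []
    rw [hF, fourierM, ← integral_conj, ← integral_prod_mul, ← integral_mul_const]
    apply integral_congr_ae
    filter_upwards with p
    rw [hΦ]
    simp only []
    rw [map_mul, conj_exp, hgauss_eq ξ]
    have hip : (inner ℝ ξ (p.1 - p.2) : ℝ) = (inner ℝ p.1 ξ : ℝ) - (inner ℝ p.2 ξ : ℝ) := by
      rw [real_inner_comm, inner_sub_left]
    have hsplit : Complex.exp ((↑(-(2 * Real.pi * (inner ℝ ξ (p.1 - p.2) : ℝ))) : ℂ) * Complex.I) =
        Complex.exp ((↑(-(2 * Real.pi * (inner ℝ p.1 ξ : ℝ))) : ℂ) * Complex.I) *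
          Complex.exp ((↑(-(-(2 * Real.pi * (inner ℝ p.2 ξ : ℝ)))) : ℂ) * Complex.I) := by
      rw [← Complex.exp_add]
      congr 1
      rw [hip]
      push_cast
      ring
    rw [hsplit]
    ring
  -- measurability of the big integrand
  have hΦsm : StronglyMeasurable (fun q : E × (E × E) => Φ q.2 q.1) := by
    rw [hΦ]
    apply StronglyMeasurable.mul
    · apply StronglyMeasurable.mul
      · exact hfm.comp_measurable (measurable_fst.comp measurable_snd)
      · exact Complex.continuous_conj.comp_stronglyMeasurable
          (hfm.comp_measurable (measurable_snd.comp measurable_snd))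
    · apply Continuous.stronglyMeasurable
      apply Continuous.mul
      · apply Complex.continuous_exp.comp
        apply Continuous.mul ?_ continuous_const
        apply Complex.continuous_ofReal.comp
        apply Continuous.neg
        apply Continuous.mul continuous_const
        exact continuous_fst.inner
          ((continuous_fst.comp continuous_snd).sub (continuous_snd.comp continuous_snd))
      · apply Complex.continuous_exp.comp
        apply Continuous.mul continuous_const
        exact (Complex.continuous_ofReal.comp (continuous_norm.comp continuous_fst)).pow 2
  have hΦnorm : ∀ q : E × (E × E), ‖Φ q.2 q.1‖ = w q.1 * (‖f q.2.1‖ * ‖f q.2.2‖) := by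
    intro q
    rw [hΦ]
    simp only []
    rw [norm_mul, norm_mul, norm_mul, RCLike.norm_conj,
      Complex.norm_exp_ofReal_mul_I, hGnorm, one_mul]
    ring
  have hΦint : Integrable (Function.uncurry fun ξ (p : E × E) => Φ p ξ)
      (volume.prod (ν.prod ν)) := by
    have hbound : Integrable (fun q : E × (E × E) => w q.1 * (‖f q.2.1‖ * ‖f q.2.2‖))
        (volume.prod (ν.prod ν)) := hw_int.mul_prod (hfi.norm.mul_prod hfi.norm)
    refine hbound.mono' ?_ ?_
    · exact (hΦsm.aestronglyMeasurable :
        AEStronglyMeasurable (Function.uncurry fun ξ (p : E × E) => Φ p ξ)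
          (volume.prod (ν.prod ν)))
    · filter_upwards with q
      rw [Function.uncurry]
      rw [hΦnorm q]
  have hswap : ∫ ξ, g ξ = ∫ p, (∫ ξ, Φ p ξ) ∂(ν.prod ν) := by
    rw [integral_congr_ae (Filter.Eventually.of_forall hprod)]
    exact integral_integral_swap hΦint
  -- the Gaussian Fourier transform
  have hinner : ∀ p : E × E, (∫ ξ, Φ p ξ) =
      f p.1 * (starRingEnd ℂ) (f p.2) *
        ((((Real.pi * R ^ 2) ^ ((d : ℝ) / 2) : ℝ) : ℂ) * ((K p : ℝ) : ℂ)) := by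
    intro p
    rw [hΦ]
    simp only []
    rw [integral_const_mul]
    congr 1
    have hFT := fourier_gaussian_innerProductSpace (V := E) hb (p.1 - p.2)
    rw [Real.fourier_eq'] at hFT
    simp only [smul_eq_mul] at hFT
    have hre : ∀ ξ : E, (-(2 * Real.pi * (inner ℝ ξ (p.1 - p.2) : ℝ))) =
        -2 * Real.pi * (inner ℝ ξ (p.1 - p.2) : ℝ) := fun ξ => by ring
    simp_rw [hre]
    rw [hFT]
    have hfr : ((Module.finrank ℝ (EuclideanSpace ℝ (Fin d)) : ℂ)) = (d : ℂ) := by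
      norm_cast
      exact finrank_euclideanSpace_fin
    have h1 : ((Real.pi : ℂ) / b) = ((Real.pi * R ^ 2 : ℝ) : ℂ) := by
      rw [hbdef]
      push_cast
      field_simp
    have h2 : ((Real.pi * R ^ 2 : ℝ) : ℂ) ^ ((Module.finrank ℝ (EuclideanSpace ℝ (Fin d)) : ℂ) / 2) =
        (((Real.pi * R ^ 2) ^ ((d : ℝ) / 2) : ℝ) : ℂ) := by
      rw [Complex.ofReal_cpow (by positivity), hfr]
      push_cast
      ring_nf
    have h3 : Complex.exp (-(Real.pi : ℂ) ^ 2 * (‖p.1 - p.2‖ : ℂ) ^ 2 / b) = ((K p : ℝ) : ℂ) := by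
      rw [hK]
      simp only []
      rw [Complex.ofReal_exp]
      congr 1
      rw [hbdef]
      have hR0 : (R : ℂ) ≠ 0 := by
        exact_mod_cast hRpos.ne'
      push_cast
      field_simp
    rw [h1, h2, h3]
  -- Step D : real bound
  have hfinal_real : ∫ ξ, ‖F ξ‖ ^ 2 * w ξ ≤
      (Real.pi * R ^ 2) ^ ((d : ℝ) / 2) * ∫ p, ‖f p.1‖ * ‖f p.2‖ * K p ∂(ν.prod ν) := by
    rw [stepB, hswap, integral_congr_ae (Filter.Eventually.of_forall hinner)]
    refine le_trans (le_trans (le_abs_self _) (Complex.abs_re_le_norm _)) ?_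
    refine (norm_integral_le_integral_norm _).trans ?_
    rw [← integral_const_mul]
    apply le_of_eq
    apply integral_congr_ae
    filter_upwards with p
    rw [norm_mul, norm_mul, RCLike.norm_conj, norm_mul, Complex.norm_real, Complex.norm_real,
      Real.norm_of_nonneg (hK_nonneg p), Real.norm_of_nonneg (by positivity)]
    ring
  -- Step E : back to lintegral
  have hKfint : Integrable (fun p : E × E => ‖f p.1‖ * ‖f p.2‖ * K p) (ν.prod ν) := by
    refine (hfi.norm.mul_prod hfi.norm).mono' ?_ ?_
    · exact (((hfm.comp_measurable measurable_fst).norm.mul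
        (hfm.comp_measurable measurable_snd).norm).mul
        (Continuous.stronglyMeasurable (by
          apply Real.continuous_exp.comp
          apply Continuous.neg
          apply Continuous.mul continuous_const
          exact (continuous_norm.comp (continuous_fst.sub continuous_snd)).pow 2))).aestronglyMeasurable
    · filter_upwards with p
      rw [Real.norm_of_nonneg (by positivity)]
      calc ‖f p.1‖ * ‖f p.2‖ * K p ≤ ‖f p.1‖ * ‖f p.2‖ * 1 := by
            apply mul_le_mul_of_nonneg_left (hK_le_one p) (by positivity)
        _ = ‖f p.1‖ * ‖f p.2‖ := by ring
  have hmeas : AEMeasurable (fun p : E × E =>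
      (‖f p.1‖₊ : ℝ≥0∞) * (‖f p.2‖₊ : ℝ≥0∞) * ENNReal.ofReal (K p)) (ν.prod ν) := by
    apply Measurable.aemeasurable
    refine Measurable.mul (f := fun p : E × E => (‖f p.1‖₊ : ℝ≥0∞) * (‖f p.2‖₊ : ℝ≥0∞))
      (g := fun p : E × E => ENNReal.ofReal (K p)) ?_ ?_
    · exact ((hfm.measurable.comp measurable_fst).nnnorm.coe_nnreal_ennreal).mul
        ((hfm.measurable.comp measurable_snd).nnnorm.coe_nnreal_ennreal)
    · apply ENNReal.measurable_ofReal.comp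
      apply Continuous.measurable
      apply Real.continuous_exp.comp
      apply Continuous.neg
      apply Continuous.mul continuous_const
      exact (continuous_norm.comp (continuous_fst.sub continuous_snd)).pow 2
  have stepE : ENNReal.ofReal (∫ p, ‖f p.1‖ * ‖f p.2‖ * K p ∂(ν.prod ν)) =
      ∫⁻ x, ∫⁻ y, (‖f x‖₊ : ℝ≥0∞) * (‖f y‖₊ : ℝ≥0∞) *
        ENNReal.ofReal (Real.exp (-((Real.pi * R) ^ 2 * ‖x - y‖ ^ 2))) ∂ν ∂ν := by
    rw [MeasureTheory.ofReal_integral_eq_lintegral_ofReal hKfint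
      (Filter.Eventually.of_forall fun p => by positivity)]
    calc ∫⁻ p, ENNReal.ofReal (‖f p.1‖ * ‖f p.2‖ * K p) ∂(ν.prod ν)
        = ∫⁻ p, (‖f p.1‖₊ : ℝ≥0∞) * (‖f p.2‖₊ : ℝ≥0∞) * ENNReal.ofReal (K p) ∂(ν.prod ν) := by
          apply lintegral_congr
          intro p
          rw [ENNReal.ofReal_mul (by positivity), ENNReal.ofReal_mul (norm_nonneg _),
            ofReal_norm, ofReal_norm, enorm_eq_nnnorm, enorm_eq_nnnorm]
      _ = _ := lintegral_prod _ hmeas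
  calc ∫⁻ ξ, (‖F ξ‖₊ : ℝ≥0∞) ^ 2 * ENNReal.ofReal (w ξ)
      = ENNReal.ofReal (∫ ξ, ‖F ξ‖ ^ 2 * w ξ) := stepA
    _ ≤ ENNReal.ofReal ((Real.pi * R ^ 2) ^ ((d : ℝ) / 2) *
        ∫ p, ‖f p.1‖ * ‖f p.2‖ * K p ∂(ν.prod ν)) := ENNReal.ofReal_le_ofReal hfinal_real
    _ = ENNReal.ofReal ((Real.pi * R ^ 2) ^ ((d : ℝ) / 2)) *
        ENNReal.ofReal (∫ p, ‖f p.1‖ * ‖f p.2‖ * K p ∂(ν.prod ν)) :=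
          ENNReal.ofReal_mul (by positivity)
    _ = _ := by rw [stepE]


lemma isFiniteMeasure_of (ν : Measure E) (hνc : HasCompactSupportM ν)
    {s Cν : ℝ} (hF : IsFrostman ν s Cν) : IsFiniteMeasure ν := by
  obtain ⟨K, hK, hK0⟩ := hνc
  obtain ⟨r, hr⟩ := hK.isBounded.subset_closedBall 0
  constructor
  have hsub : (univ : Set E) ⊆ Metric.closedBall 0 (max r 1) ∪ Kᶜ := by
    intro z _
    by_cases hz : z ∈ K
    · exact Or.inl (Metric.closedBall_subset_closedBall (le_max_left _ _) (hr hz))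
    · exact Or.inr hz
  calc ν univ ≤ ν (Metric.closedBall 0 (max r 1) ∪ Kᶜ) := measure_mono hsub
    _ ≤ ν (Metric.closedBall 0 (max r 1)) + ν Kᶜ := measure_union_le _ _
    _ = ν (Metric.closedBall 0 (max r 1)) := by rw [hK0, add_zero]
    _ ≤ ENNReal.ofReal (Cν * (max r 1) ^ s) := hF _ _ (lt_of_lt_of_le one_pos (le_max_right r 1))
    _ < ⊤ := ENNReal.ofReal_lt_top

lemma lintegral_sq_eq (ν : Measure E) (f : E → ℂ) :
    eLpNorm f 2 ν ^ 2 = ∫⁻ x, (‖f x‖₊ : ℝ≥0∞) ^ 2 ∂ν := by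
  rw [eLpNorm_eq_lintegral_rpow_enorm_toReal two_ne_zero ENNReal.ofNat_ne_top]
  simp_rw [enorm_eq_nnnorm]
  rw [ENNReal.toReal_ofNat]
  rw [← ENNReal.rpow_natCast _ 2, ← ENNReal.rpow_mul]
  norm_num

-- the double-integral bound via AM-GM and the Frostman gaussian estimate
lemma double_bound {ν : Measure E} [IsFiniteMeasure ν] {f : E → ℂ}
    (hfm : StronglyMeasurable f) {s M : ℝ} {a : ℝ} (ha : 1 ≤ a)
    (hM : ∀ x : E, ∫⁻ y, ENNReal.ofReal (Real.exp (-(a ^ 2 * ‖x - y‖ ^ 2))) ∂ν ≤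
      ENNReal.ofReal (M * a ^ (-s))) :
    ∫⁻ x, ∫⁻ y, (‖f x‖₊ : ℝ≥0∞) * (‖f y‖₊ : ℝ≥0∞) *
        ENNReal.ofReal (Real.exp (-(a ^ 2 * ‖x - y‖ ^ 2))) ∂ν ∂ν ≤
      2 * ENNReal.ofReal (M * a ^ (-s)) * ∫⁻ x, (‖f x‖₊ : ℝ≥0∞) ^ 2 ∂ν := by
  set G : E → E → ℝ≥0∞ := fun x y => ENNReal.ofReal (Real.exp (-(a ^ 2 * ‖x - y‖ ^ 2))) with hG
  have hGmeas : Measurable (Function.uncurry G) := by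
    rw [hG]
    apply Measurable.comp (ENNReal.measurable_ofReal)
    apply Continuous.measurable
    apply Real.continuous_exp.comp
    apply Continuous.neg
    apply Continuous.mul continuous_const
    exact (continuous_norm.comp (continuous_fst.sub continuous_snd)).pow 2
  have hfmeas : Measurable fun x : E => (‖f x‖₊ : ℝ≥0∞) := hfm.measurable.nnnorm.coe_nnreal_ennreal
  have step1 : ∫⁻ x, ∫⁻ y, (‖f x‖₊ : ℝ≥0∞) * (‖f y‖₊ : ℝ≥0∞) * G x y ∂ν ∂ν ≤
      ∫⁻ x, ∫⁻ y, ((‖f x‖₊ : ℝ≥0∞) ^ 2 * G x y + (‖f y‖₊ : ℝ≥0∞) ^ 2 * G x y) ∂ν ∂ν := by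
    apply lintegral_mono
    intro x
    apply lintegral_mono
    intro y
    calc (‖f x‖₊ : ℝ≥0∞) * (‖f y‖₊ : ℝ≥0∞) * G x y
        ≤ ((‖f x‖₊ : ℝ≥0∞) ^ 2 + (‖f y‖₊ : ℝ≥0∞) ^ 2) * G x y :=
          mul_le_mul_left (ennreal_amgm _ _) _
      _ = _ := add_mul _ _ _
  have step2 : ∀ x : E, ∫⁻ y, ((‖f x‖₊ : ℝ≥0∞) ^ 2 * G x y + (‖f y‖₊ : ℝ≥0∞) ^ 2 * G x y) ∂ν =
      (‖f x‖₊ : ℝ≥0∞) ^ 2 * ∫⁻ y, G x y ∂ν + ∫⁻ y, (‖f y‖₊ : ℝ≥0∞) ^ 2 * G x y ∂ν := by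
    intro x
    rw [lintegral_add_left]
    · rw [lintegral_const_mul']
      exact ENNReal.pow_ne_top ENNReal.coe_ne_top
    · exact measurable_const.mul (hGmeas.of_uncurry_left)
  have hT1 : ∫⁻ x, (‖f x‖₊ : ℝ≥0∞) ^ 2 * ∫⁻ y, G x y ∂ν ∂ν ≤
      ENNReal.ofReal (M * a ^ (-s)) * ∫⁻ x, (‖f x‖₊ : ℝ≥0∞) ^ 2 ∂ν := by
    calc ∫⁻ x, (‖f x‖₊ : ℝ≥0∞) ^ 2 * ∫⁻ y, G x y ∂ν ∂ν
        ≤ ∫⁻ x, (‖f x‖₊ : ℝ≥0∞) ^ 2 * ENNReal.ofReal (M * a ^ (-s)) ∂ν := by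
          apply lintegral_mono
          intro x
          exact mul_le_mul_right (hM x) _
      _ = ENNReal.ofReal (M * a ^ (-s)) * ∫⁻ x, (‖f x‖₊ : ℝ≥0∞) ^ 2 ∂ν := by
          simp_rw [mul_comm]
          rw [lintegral_const_mul']
          exact ENNReal.ofReal_ne_top
  have hT2 : ∫⁻ x, ∫⁻ y, (‖f y‖₊ : ℝ≥0∞) ^ 2 * G x y ∂ν ∂ν ≤
      ENNReal.ofReal (M * a ^ (-s)) * ∫⁻ x, (‖f x‖₊ : ℝ≥0∞) ^ 2 ∂ν := by
    have hswap : ∫⁻ x, ∫⁻ y, (‖f y‖₊ : ℝ≥0∞) ^ 2 * G x y ∂ν ∂ν =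
        ∫⁻ y, ∫⁻ x, (‖f y‖₊ : ℝ≥0∞) ^ 2 * G x y ∂ν ∂ν := by
      apply lintegral_lintegral_swap
      apply Measurable.aemeasurable
      exact ((hfmeas.comp measurable_snd).pow_const 2).mul hGmeas
    rw [hswap]
    calc ∫⁻ y, ∫⁻ x, (‖f y‖₊ : ℝ≥0∞) ^ 2 * G x y ∂ν ∂ν
        = ∫⁻ y, (‖f y‖₊ : ℝ≥0∞) ^ 2 * ∫⁻ x, G x y ∂ν ∂ν := by
          apply lintegral_congr
          intro y
          rw [lintegral_const_mul']
          exact ENNReal.pow_ne_top ENNReal.coe_ne_top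
      _ ≤ ∫⁻ y, (‖f y‖₊ : ℝ≥0∞) ^ 2 * ENNReal.ofReal (M * a ^ (-s)) ∂ν := by
          apply lintegral_mono
          intro y
          apply mul_le_mul_right
          have : ∫⁻ x, G x y ∂ν = ∫⁻ x, ENNReal.ofReal (Real.exp (-(a ^ 2 * ‖y - x‖ ^ 2))) ∂ν := by
            apply lintegral_congr
            intro x
            rw [hG]
            simp only []
            rw [norm_sub_rev]
          rw [this]
          exact hM y
      _ = ENNReal.ofReal (M * a ^ (-s)) * ∫⁻ y, (‖f y‖₊ : ℝ≥0∞) ^ 2 ∂ν := by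
          simp_rw [mul_comm]
          rw [lintegral_const_mul']
          exact ENNReal.ofReal_ne_top
  calc ∫⁻ x, ∫⁻ y, (‖f x‖₊ : ℝ≥0∞) * (‖f y‖₊ : ℝ≥0∞) * G x y ∂ν ∂ν
      ≤ ∫⁻ x, ∫⁻ y, ((‖f x‖₊ : ℝ≥0∞) ^ 2 * G x y + (‖f y‖₊ : ℝ≥0∞) ^ 2 * G x y) ∂ν ∂ν := step1
    _ = ∫⁻ x, ((‖f x‖₊ : ℝ≥0∞) ^ 2 * ∫⁻ y, G x y ∂ν + ∫⁻ y, (‖f y‖₊ : ℝ≥0∞) ^ 2 * G x y ∂ν) ∂ν := by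
        apply lintegral_congr step2
    _ = (∫⁻ x, (‖f x‖₊ : ℝ≥0∞) ^ 2 * ∫⁻ y, G x y ∂ν ∂ν) +
        ∫⁻ x, ∫⁻ y, (‖f y‖₊ : ℝ≥0∞) ^ 2 * G x y ∂ν ∂ν := by
        apply lintegral_add_left
        apply Measurable.mul (hfmeas.pow_const 2)
        exact hGmeas.lintegral_prod_right'
    _ ≤ ENNReal.ofReal (M * a ^ (-s)) * (∫⁻ x, (‖f x‖₊ : ℝ≥0∞) ^ 2 ∂ν) +
        ENNReal.ofReal (M * a ^ (-s)) * ∫⁻ x, (‖f x‖₊ : ℝ≥0∞) ^ 2 ∂ν := add_le_add hT1 hT2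
    _ = 2 * ENNReal.ofReal (M * a ^ (-s)) * ∫⁻ x, (‖f x‖₊ : ℝ≥0∞) ^ 2 ∂ν := by ring


end Stmt6Aux

/-- the dyadic-annulus Fourier energy estimate
`∫_{2^j ≤ |ξ| ≤ 2^{j+1}} |𝔽(fν)(ξ)|² dξ ≤ C 2^{j(d - s_ν + η)} ‖f‖²_{L²(ν)}`. -/
theorem stmt_6 (d : ℕ) (hd : 1 ≤ d) (sν : ℝ) (hsν0 : 0 < sν) (hsνd : sν ≤ d)
    (ν : Measure (EuclideanSpace ℝ (Fin d))) (hνc : HasCompactSupportM ν)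
    (hνF : ∃ C : ℝ, 0 < C ∧ IsFrostman ν sν C) :
    ∀ η : ℝ, 0 < η → ∃ C : ℝ, 0 < C ∧ ∀ (j : ℕ) (f : EuclideanSpace ℝ (Fin d) → ℂ),
      MemLp f 2 ν →
      ∫⁻ ξ in {ξ : EuclideanSpace ℝ (Fin d) | (2 : ℝ) ^ j ≤ ‖ξ‖ ∧ ‖ξ‖ ≤ 2 ^ (j + 1)},
          (‖fourierM ν f ξ‖₊ : ℝ≥0∞) ^ 2 ≤
        ENNReal.ofReal C * (2 : ℝ≥0∞) ^ ((j : ℝ) * ((d : ℝ) - sν + η)) * eLpNorm f 2 ν ^ 2 := by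
  intro η hη
  obtain ⟨Cν, hCν, hFrost⟩ := hνF
  haveI : IsFiniteMeasure ν := isFiniteMeasure_of ν hνc hFrost
  obtain ⟨M, hM0, hM⟩ := frostman_gauss hCν.le hFrost
  refine ⟨Real.exp 1 * Real.pi ^ ((d:ℝ)/2) * (2 * M + 1) * 2 ^ ((d:ℝ)), by positivity, ?_⟩
  set Creal : ℝ := Real.exp 1 * Real.pi ^ ((d:ℝ)/2) * (2 * M + 1) * 2 ^ ((d:ℝ)) with hCreal
  intro j f hf
  obtain ⟨f', hf'sm, hff'⟩ := hf.1
  have hf' : MemLp f' 2 ν := MemLp.ae_eq hff' hf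
  have hfi' : Integrable f' ν := hf'.integrable one_le_two
  have hfourier_eq : ∀ ξ, fourierM ν f ξ = fourierM ν f' ξ := by
    intro ξ
    apply integral_congr_ae
    filter_upwards [hff'] with x hx
    rw [hx]
  have heLp : eLpNorm f 2 ν = eLpNorm f' 2 ν := eLpNorm_congr_ae hff'
  simp_rw [hfourier_eq, heLp]
  set R : ℝ := 2 ^ (j+1) with hRdef
  have hR1 : (1:ℝ) ≤ R := one_le_pow₀ one_le_two
  have hRpos : (0:ℝ) < R := lt_of_lt_of_le one_pos hR1
  have hpi1 : (1:ℝ) ≤ Real.pi := by linarith [Real.pi_gt_three]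
  have ha1 : (1:ℝ) ≤ Real.pi * R := by nlinarith
  have hA : MeasurableSet {ξ : EuclideanSpace ℝ (Fin d) | (2:ℝ)^j ≤ ‖ξ‖ ∧ ‖ξ‖ ≤ R} := by
    have : {ξ : EuclideanSpace ℝ (Fin d) | (2:ℝ)^j ≤ ‖ξ‖ ∧ ‖ξ‖ ≤ R} =
        {ξ : EuclideanSpace ℝ (Fin d) | (2:ℝ)^j ≤ ‖ξ‖} ∩
          {ξ : EuclideanSpace ℝ (Fin d) | ‖ξ‖ ≤ R} := rfl
    rw [this]
    exact (measurableSet_le measurable_const measurable_norm).inter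
      (measurableSet_le measurable_norm measurable_const)
  have hann : (∫⁻ ξ in {ξ : EuclideanSpace ℝ (Fin d) | (2:ℝ)^j ≤ ‖ξ‖ ∧ ‖ξ‖ ≤ R},
        (‖fourierM ν f' ξ‖₊ : ℝ≥0∞) ^ 2) ≤
      ENNReal.ofReal (Real.exp 1) *
        ∫⁻ ξ, (‖fourierM ν f' ξ‖₊ : ℝ≥0∞) ^ 2 *
          ENNReal.ofReal (Real.exp (-((R^2)⁻¹ * ‖ξ‖^2))) := by
    have hpt : ∀ᵐ ξ ∂(volume.restrict {ξ : EuclideanSpace ℝ (Fin d) | (2:ℝ)^j ≤ ‖ξ‖ ∧ ‖ξ‖ ≤ R}),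
        (‖fourierM ν f' ξ‖₊ : ℝ≥0∞)^2 ≤
        ENNReal.ofReal (Real.exp 1) * ((‖fourierM ν f' ξ‖₊:ℝ≥0∞)^2 *
          ENNReal.ofReal (Real.exp (-((R^2)⁻¹*‖ξ‖^2)))) := by
      filter_upwards [ae_restrict_mem hA] with ξ hξ
      have h1 : (1:ℝ≥0∞) ≤ ENNReal.ofReal (Real.exp 1) *
          ENNReal.ofReal (Real.exp (-((R^2)⁻¹*‖ξ‖^2))) := by
        rw [← ENNReal.ofReal_mul (Real.exp_pos 1).le, ← Real.exp_add, ENNReal.one_le_ofReal]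
        apply Real.one_le_exp
        have h2 : ‖ξ‖^2 ≤ R^2 := by
          apply pow_le_pow_left₀ (norm_nonneg _) hξ.2
        have hn : (R^2)⁻¹ * ‖ξ‖^2 ≤ 1 := by
          calc (R^2)⁻¹ * ‖ξ‖^2 ≤ (R^2)⁻¹ * R^2 := by
                apply mul_le_mul_of_nonneg_left h2 (by positivity)
            _ = 1 := by field_simp
        linarith
      calc (‖fourierM ν f' ξ‖₊:ℝ≥0∞)^2 = (‖fourierM ν f' ξ‖₊:ℝ≥0∞)^2 * 1 := (mul_one _).symm
        _ ≤ (‖fourierM ν f' ξ‖₊:ℝ≥0∞)^2 * (ENNReal.ofReal (Real.exp 1) *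
            ENNReal.ofReal (Real.exp (-((R^2)⁻¹*‖ξ‖^2)))) := mul_le_mul_right h1 _
        _ = ENNReal.ofReal (Real.exp 1) * ((‖fourierM ν f' ξ‖₊:ℝ≥0∞)^2 *
            ENNReal.ofReal (Real.exp (-((R^2)⁻¹*‖ξ‖^2)))) := by ring
    calc (∫⁻ ξ in {ξ : EuclideanSpace ℝ (Fin d) | (2:ℝ)^j ≤ ‖ξ‖ ∧ ‖ξ‖ ≤ R},
          (‖fourierM ν f' ξ‖₊ : ℝ≥0∞) ^ 2)
        ≤ ∫⁻ ξ in {ξ : EuclideanSpace ℝ (Fin d) | (2:ℝ)^j ≤ ‖ξ‖ ∧ ‖ξ‖ ≤ R},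
            ENNReal.ofReal (Real.exp 1) * ((‖fourierM ν f' ξ‖₊:ℝ≥0∞)^2 *
              ENNReal.ofReal (Real.exp (-((R^2)⁻¹*‖ξ‖^2)))) := lintegral_mono_ae hpt
      _ ≤ ∫⁻ ξ, ENNReal.ofReal (Real.exp 1) * ((‖fourierM ν f' ξ‖₊:ℝ≥0∞)^2 *
              ENNReal.ofReal (Real.exp (-((R^2)⁻¹*‖ξ‖^2)))) := setLIntegral_le_lintegral _ _
      _ = _ := lintegral_const_mul' _ _ ENNReal.ofReal_ne_top
  have hkey := key hf'sm hfi' hR1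
  have hdb := double_bound (s := sν) (M := M) hf'sm ha1 (fun x => hM (Real.pi * R) ha1 x)
  have hconst : ENNReal.ofReal (Real.exp 1) * ENNReal.ofReal ((Real.pi * R^2) ^ ((d:ℝ)/2)) *
      (2 * ENNReal.ofReal (M * (Real.pi*R) ^ (-sν))) ≤
      ENNReal.ofReal Creal * (2:ℝ≥0∞) ^ ((j:ℝ) * ((d:ℝ) - sν + η)) := by
    have e1 : (Real.pi * R^2) ^ ((d:ℝ)/2) = Real.pi ^ ((d:ℝ)/2) * R ^ ((d:ℝ)) := by
      rw [Real.mul_rpow Real.pi_pos.le (by positivity)]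
      congr 1
      rw [← Real.rpow_natCast R 2, ← Real.rpow_mul hRpos.le]
      congr 1
      push_cast
      ring
    have e2 : (Real.pi * R) ^ (-sν) ≤ R ^ (-sν) :=
      Real.rpow_le_rpow_of_nonpos hRpos (le_mul_of_one_le_left hRpos.le hpi1) (by linarith)
    have e3 : R ^ ((d:ℝ)) * R ^ (-sν) = R ^ ((d:ℝ) - sν) := by
      rw [← Real.rpow_add hRpos]
      ring_nf
    have e4 : R ^ ((d:ℝ) - sν) = (2:ℝ) ^ (((j:ℝ)+1) * ((d:ℝ) - sν)) := by
      rw [hRdef, ← Real.rpow_natCast (2:ℝ) (j+1), ← Real.rpow_mul (by norm_num : (0:ℝ) ≤ 2)]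
      push_cast
      ring_nf
    have e5 : (2:ℝ) ^ (((j:ℝ)+1) * ((d:ℝ) - sν)) ≤
        (2:ℝ) ^ ((j:ℝ)*((d:ℝ)-sν+η) + (d:ℝ)) := by
      apply Real.rpow_le_rpow_of_exponent_le one_le_two
      have hj : (0:ℝ) ≤ (j:ℝ) := Nat.cast_nonneg j
      nlinarith [hη.le, hsν0.le]
    have e6 : (2:ℝ) ^ ((j:ℝ)*((d:ℝ)-sν+η) + (d:ℝ)) =
        (2:ℝ) ^ ((d:ℝ)) * (2:ℝ) ^ ((j:ℝ)*((d:ℝ)-sν+η)) := by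
      rw [Real.rpow_add two_pos]
      ring
    have hreal : Real.exp 1 * ((Real.pi * R^2) ^ ((d:ℝ)/2)) * (2 * (M * (Real.pi*R) ^ (-sν))) ≤
        Creal * 2 ^ ((j:ℝ) * ((d:ℝ) - sν + η)) := by
      calc Real.exp 1 * ((Real.pi * R^2) ^ ((d:ℝ)/2)) * (2 * (M * (Real.pi*R) ^ (-sν)))
          = (Real.exp 1 * Real.pi ^ ((d:ℝ)/2) * (2*M)) * (R ^ ((d:ℝ)) * (Real.pi*R) ^ (-sν)) := by
            rw [e1]; ring
        _ ≤ (Real.exp 1 * Real.pi ^ ((d:ℝ)/2) * (2*M+1)) * (R ^ ((d:ℝ)) * R ^ (-sν)) := by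
            apply mul_le_mul ?_ ?_ (by positivity) (by positivity)
            · have h1 : (0:ℝ) < Real.exp 1 * Real.pi ^ ((d:ℝ)/2) := by positivity
              nlinarith
            · exact mul_le_mul_of_nonneg_left e2 (by positivity)
        _ = (Real.exp 1 * Real.pi ^ ((d:ℝ)/2) * (2*M+1)) * R ^ ((d:ℝ) - sν) := by rw [e3]
        _ = (Real.exp 1 * Real.pi ^ ((d:ℝ)/2) * (2*M+1)) *
            (2:ℝ) ^ (((j:ℝ)+1) * ((d:ℝ) - sν)) := by rw [e4]
        _ ≤ (Real.exp 1 * Real.pi ^ ((d:ℝ)/2) * (2*M+1)) *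
            ((2:ℝ) ^ ((d:ℝ)) * (2:ℝ) ^ ((j:ℝ)*((d:ℝ)-sν+η))) := by
            rw [← e6]
            exact mul_le_mul_of_nonneg_left e5 (by positivity)
        _ = Creal * 2 ^ ((j:ℝ) * ((d:ℝ) - sν + η)) := by rw [hCreal]; ring
    calc ENNReal.ofReal (Real.exp 1) * ENNReal.ofReal ((Real.pi * R^2) ^ ((d:ℝ)/2)) *
        (2 * ENNReal.ofReal (M * (Real.pi*R) ^ (-sν)))
        = ENNReal.ofReal (Real.exp 1 * ((Real.pi * R^2) ^ ((d:ℝ)/2)) *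
            (2 * (M * (Real.pi*R) ^ (-sν)))) := by
          rw [← ENNReal.ofReal_ofNat 2, ← ENNReal.ofReal_mul (by norm_num : (0:ℝ) ≤ 2),
            ← ENNReal.ofReal_mul (by positivity : (0:ℝ) ≤ Real.exp 1),
            ← ENNReal.ofReal_mul (by positivity)]
      _ ≤ ENNReal.ofReal (Creal * 2 ^ ((j:ℝ) * ((d:ℝ) - sν + η))) :=
          ENNReal.ofReal_le_ofReal hreal
      _ = ENNReal.ofReal Creal * (2:ℝ≥0∞) ^ ((j:ℝ) * ((d:ℝ) - sν + η)) := by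
          rw [ENNReal.ofReal_mul (by positivity), ← ENNReal.ofReal_rpow_of_pos two_pos]
          norm_num
  calc (∫⁻ ξ in {ξ : EuclideanSpace ℝ (Fin d) | (2:ℝ)^j ≤ ‖ξ‖ ∧ ‖ξ‖ ≤ R},
        (‖fourierM ν f' ξ‖₊ : ℝ≥0∞) ^ 2)
      ≤ ENNReal.ofReal (Real.exp 1) *
        ∫⁻ ξ, (‖fourierM ν f' ξ‖₊ : ℝ≥0∞) ^ 2 *
          ENNReal.ofReal (Real.exp (-((R^2)⁻¹ * ‖ξ‖^2))) := hann
    _ ≤ ENNReal.ofReal (Real.exp 1) * (ENNReal.ofReal ((Real.pi * R^2) ^ ((d:ℝ)/2)) *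
          ∫⁻ x, ∫⁻ y, (‖f' x‖₊ : ℝ≥0∞) * (‖f' y‖₊ : ℝ≥0∞) *
            ENNReal.ofReal (Real.exp (-((Real.pi * R) ^ 2 * ‖x - y‖ ^ 2))) ∂ν ∂ν) :=
        mul_le_mul_right hkey _
    _ ≤ ENNReal.ofReal (Real.exp 1) * (ENNReal.ofReal ((Real.pi * R^2) ^ ((d:ℝ)/2)) *
          (2 * ENNReal.ofReal (M * (Real.pi*R) ^ (-sν)) *
            ∫⁻ x, (‖f' x‖₊ : ℝ≥0∞) ^ 2 ∂ν)) :=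
        mul_le_mul_right (mul_le_mul_right hdb _) _
    _ = (ENNReal.ofReal (Real.exp 1) * ENNReal.ofReal ((Real.pi * R^2) ^ ((d:ℝ)/2)) *
          (2 * ENNReal.ofReal (M * (Real.pi*R) ^ (-sν)))) *
            ∫⁻ x, (‖f' x‖₊ : ℝ≥0∞) ^ 2 ∂ν := by ring
    _ ≤ (ENNReal.ofReal Creal * (2:ℝ≥0∞) ^ ((j:ℝ) * ((d:ℝ) - sν + η))) *
            ∫⁻ x, (‖f' x‖₊ : ℝ≥0∞) ^ 2 ∂ν := mul_le_mul_left hconst _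
    _ = ENNReal.ofReal Creal * (2:ℝ≥0∞) ^ ((j:ℝ) * ((d:ℝ) - sν + η)) * eLpNorm f' 2 ν ^ 2 := by
          rw [lintegral_sq_eq]
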